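/- Every finite group of order less than $60$ is solvable. -/

import Mathlib

open Subgroup

universe u

section SolvAux

variable (G : Type u) [Group G] [Finite G]

private lemma my_solvable_of_normal (N : Subgroup G) [N.Normal]
    [Group.IsSolvable N] [Group.IsSolvable (G ⧸ N)] : IsSolvable G :=
  solvable_of_ker_le_range N.subtype (QuotientGroup.mk' N)
    (by rw [QuotientGroup.ker_mk', Subgroup.range_subtype])

private lemma pgroupSolvable (p k : ℕ) (hp : p.Prime) (h : Nat.card G = p ^ k) :
    IsSolvable G := by
  haveI := Fact.mk hp
  haveI := (IsPGroup.of_card h).isNilpotent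
  exact (inferInstance : Group.IsSolvable G)

private lemma sylow_mod (p : ℕ) (hp : p.Prime) [Fact p.Prime] :
    Nat.card (Sylow p G) % p = 1 := by
  have h := card_sylow_modEq_one p G
  have h1 : 1 % p = 1 := Nat.mod_eq_of_lt hp.one_lt
  rwa [Nat.ModEq, h1] at h

private lemma sylow_normal_of_card_one (p : ℕ) [Fact p.Prime] (P : Sylow p G)
    (h1 : Nat.card (Sylow p G) = 1) : (P : Subgroup G).Normal := by
  haveI : Subsingleton (Sylow p G) := (Nat.card_eq_one_iff_unique.mp h1).1
  rw [← normalizer_eq_top_iff, eq_top_iff']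
  intro g
  exact Sylow.smul_eq_iff_mem_normalizer.mp (Subsingleton.elim (g • P) P)

private lemma critAB (p : ℕ) (hp : p.Prime) (hdvd : p ∣ Nat.card G)
    (hq : ∃ q, q.Prime ∧ q ∣ Nat.card G ∧ q ≠ p)
    (hfact : ∀ m, m ≤ Nat.card G → m ∣ Nat.card G → m % p = 1 → 1 < m →
      ¬ Nat.card G ∣ Nat.factorial m) :
    ∃ N : Subgroup G, N.Normal ∧ N ≠ ⊥ ∧ N ≠ ⊤ := by
  haveI := Fact.mk hp
  obtain ⟨P⟩ : Nonempty (Sylow p G) := inferInstance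
  have hmdvd : Nat.card (Sylow p G) ∣ Nat.card G :=
    (P.card_dvd_index).trans (index_dvd_card _)
  have hmod := sylow_mod G p hp
  rcases Nat.lt_or_ge 1 (Nat.card (Sylow p G)) with h1 | h1
  · set φ := MulAction.toPermHom G (Sylow p G) with hφ
    refine ⟨φ.ker, inferInstance, ?_, ?_⟩
    · intro hker
      have hinj : Function.Injective φ := (φ.ker_eq_bot_iff).mp hker
      have hdvd2 : Nat.card G ∣ Nat.card (Equiv.Perm (Sylow p G)) :=
        Subgroup.card_dvd_of_injective φ hinj
      haveI : Fintype (Sylow p G) := Fintype.ofFinite _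
      haveI := Classical.decEq (Sylow p G)
      have hpc : Nat.card (Equiv.Perm (Sylow p G)) = Nat.factorial (Nat.card (Sylow p G)) := by
        rw [Nat.card_eq_fintype_card (α := Equiv.Perm (Sylow p G)), Fintype.card_perm,
          Nat.card_eq_fintype_card (α := Sylow p G)]
      rw [hpc] at hdvd2
      exact hfact _ (Nat.le_of_dvd Nat.card_pos hmdvd) hmdvd hmod h1 hdvd2
    · intro hker
      haveI : Nontrivial (Sylow p G) := Finite.one_lt_card_iff_nontrivial.mp h1
      obtain ⟨Q, hQ⟩ := exists_ne P
      obtain ⟨g, hg⟩ := MulAction.exists_smul_eq G P Q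
      have hgker : g ∈ φ.ker := hker ▸ mem_top g
      have hfix : φ g P = P := by rw [MonoidHom.mem_ker.mp hgker]; rfl
      exact hQ (hg ▸ hfix)
  · have hcard1 : Nat.card (Sylow p G) = 1 := by
      have : 0 < Nat.card (Sylow p G) := Nat.card_pos
      omega
    haveI hnorm := sylow_normal_of_card_one G p P hcard1
    refine ⟨P, hnorm, P.ne_bot_of_dvd_card hdvd, ?_⟩
    intro htop
    obtain ⟨k, hk⟩ := IsPGroup.iff_card.mp P.isPGroup'
    obtain ⟨q, hq1, hq2, hq3⟩ := hq
    have hPG : Nat.card (P : Subgroup G) = Nat.card G := by rw [htop, Subgroup.card_top]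
    rw [hPG] at hk
    rw [hk] at hq2
    exact hq3 ((Nat.prime_dvd_prime_iff_eq hq1 hp).mp (hq1.dvd_of_dvd_pow hq2))

private lemma critC (p m₀ : ℕ) (hp : p.Prime) (hcard : Nat.card G = p * m₀)
    (hm₀ : 1 < m₀) (hpm : ¬ p ∣ m₀)
    (hforce : ∀ m, m ≤ p * m₀ → m ∣ p * m₀ → m % p = 1 → m = 1 ∨ m = m₀) :
    ∃ N : Subgroup G, N.Normal ∧ N ≠ ⊥ ∧ N ≠ ⊤ := by
  haveI := Fact.mk hp
  obtain ⟨P⟩ : Nonempty (Sylow p G) := inferInstance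
  have hdvd : p ∣ Nat.card G := hcard ▸ dvd_mul_right p m₀
  have hPp : Nat.card (P : Subgroup G) = p := by
    obtain ⟨k, hk⟩ := IsPGroup.iff_card.mp P.isPGroup'
    have h1 : p ∣ Nat.card (P : Subgroup G) := P.dvd_card_of_dvd_card hdvd
    have h2 : Nat.card (P : Subgroup G) ∣ Nat.card G := Subgroup.card_subgroup_dvd_card _
    rw [hk] at h1 h2 ⊢
    rw [hcard] at h2
    rcases k with _ | _ | k
    · rw [pow_zero] at h1
      have h3 := Nat.le_of_dvd one_pos h1
      have h4 := hp.one_lt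
      omega
    · rw [pow_one]
    · exfalso
      apply hpm
      have hpp : p * p ∣ p * m₀ := dvd_trans ⟨p ^ k, by ring⟩ h2
      exact (Nat.mul_dvd_mul_iff_left hp.pos).mp hpp
  have hmdvd : Nat.card (Sylow p G) ∣ Nat.card G :=
    (P.card_dvd_index).trans (index_dvd_card _)
  have hmod := sylow_mod G p hp
  rcases hforce _ (hcard ▸ Nat.le_of_dvd Nat.card_pos hmdvd) (hcard ▸ hmdvd) hmod with h1 | h1
  · haveI hnorm := sylow_normal_of_card_one G p P h1
    refine ⟨P, hnorm, P.ne_bot_of_dvd_card hdvd, ?_⟩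
    intro htop
    have hPG : Nat.card (P : Subgroup G) = Nat.card G := by rw [htop, Subgroup.card_top]
    rw [hPp, hcard] at hPG
    have h2 : p * 1 = p * m₀ := by rw [mul_one]; exact hPG
    have := Nat.eq_of_mul_eq_mul_left hp.pos h2
    omega
  · have hidx : (normalizer (P : Set G)).index = m₀ := by
      rw [← P.card_eq_index_normalizer, h1]
    have hNc : Nat.card (normalizer (P : Set G)) = p := by
      have h3 := Subgroup.card_mul_index (normalizer (P : Set G))
      rw [hidx, hcard] at h3
      exact Nat.eq_of_mul_eq_mul_right (by omega) h3
    have heq : (P : Subgroup G) = normalizer (P : Set G) :=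
      Subgroup.eq_of_le_of_card_ge le_normalizer (by rw [hNc, hPp])
    haveI : IsCyclic (P : Subgroup G) := isCyclic_of_prime_card hPp
    haveI : IsMulCommutative (P : Subgroup G) := ⟨⟨fun a b => by
      letI := IsCyclic.commGroup (α := (P : Subgroup G)); exact mul_comm a b⟩⟩
    have hcent : normalizer (P : Set G) ≤ Subgroup.centralizer (P : Set G) := by
      rw [← heq]; exact Subgroup.le_centralizer _
    have hcompl := MonoidHom.ker_transferSylow_isComplement' P hcent
    have hmul : Nat.card (MonoidHom.transferSylow P hcent).ker * p = Nat.card G := by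
      have h4 := hcompl.card_mul
      rwa [hPp] at h4
    refine ⟨(MonoidHom.transferSylow P hcent).ker, inferInstance, ?_, ?_⟩
    · intro hbot
      rw [hbot, Subgroup.card_bot, one_mul, hcard] at hmul
      have h2 : p * 1 = p * m₀ := by rw [mul_one]; exact hmul
      have := Nat.eq_of_mul_eq_mul_left hp.pos h2
      omega
    · intro htop
      rw [htop, Subgroup.card_top, hcard] at hmul
      have h2 : (p * m₀) * p = (p * m₀) * 1 := by rw [mul_one]; exact hmul
      have := Nat.eq_of_mul_eq_mul_left (Nat.mul_pos hp.pos (by omega)) h2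
      exact hp.one_lt.ne' this

private lemma solv_step (hN : ∃ N : Subgroup G, N.Normal ∧ N ≠ ⊥ ∧ N ≠ ⊤)
    (ih : ∀ (H : Type u) [Group H] [Finite H], Nat.card H < Nat.card G → IsSolvable H) :
    IsSolvable G := by
  obtain ⟨N, hNormal, hbot, htop⟩ := hN
  haveI := hNormal
  have h1 : 1 < Nat.card N := (Subgroup.one_lt_card_iff_ne_bot (H := N)).mpr hbot
  have hmul := Subgroup.card_mul_index N
  have hpos : 0 < Nat.card G := Nat.card_pos
  have h2 : 1 < N.index := by
    rcases Nat.lt_or_ge 1 N.index with h | h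
    · exact h
    · exfalso
      interval_cases hi : N.index
      · omega
      · exact htop (Subgroup.index_eq_one.mp hi)
  have hNlt : Nat.card N < Nat.card G := by
    calc Nat.card N < Nat.card N * N.index :=
          (lt_mul_iff_one_lt_right (by omega)).mpr h2
    _ = Nat.card G := hmul
  have hQlt : Nat.card (G ⧸ N) < Nat.card G := by
    have hq : Nat.card (G ⧸ N) = N.index := (Subgroup.index_eq_card N).symm
    calc Nat.card (G ⧸ N) = N.index := hq
    _ < Nat.card N * N.index := (lt_mul_iff_one_lt_left (by omega)).mpr h1
    _ = Nat.card G := hmul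
  haveI : Group.IsSolvable N := ih N hNlt
  haveI : Group.IsSolvable (G ⧸ N) := ih (G ⧸ N) hQlt
  exact my_solvable_of_normal G N


private lemma solv_aux : ∀ (n : ℕ), ∀ (G : Type u) [Group G] [Finite G],
    Nat.card G = n → n < 60 → IsSolvable G := by
  intro n
  induction n using Nat.strong_induction_on with
  | _ n ih =>
    intro G _ _ hG hn
    have hpos : 0 < n := hG ▸ Nat.card_pos
    interval_cases n
    · exact pgroupSolvable G 2 0 (by norm_num) (by norm_num [hG])
    · exact pgroupSolvable G 2 1 (by norm_num) (by norm_num [hG])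
    · exact pgroupSolvable G 3 1 (by norm_num) (by norm_num [hG])
    · exact pgroupSolvable G 2 2 (by norm_num) (by norm_num [hG])
    · exact pgroupSolvable G 5 1 (by norm_num) (by norm_num [hG])
    · exact solv_step G (critAB G 3 (by norm_num) (by omega) ⟨2, by norm_num, by omega, by norm_num⟩ (by rw [hG]; decide)) (fun H _ _ hH => ih (Nat.card H) (by omega) H rfl (by omega))
    · exact pgroupSolvable G 7 1 (by norm_num) (by norm_num [hG])
    · exact pgroupSolvable G 2 3 (by norm_num) (by norm_num [hG])
    · exact pgroupSolvable G 3 2 (by norm_num) (by norm_num [hG])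
    · exact solv_step G (critAB G 5 (by norm_num) (by omega) ⟨2, by norm_num, by omega, by norm_num⟩ (by rw [hG]; decide)) (fun H _ _ hH => ih (Nat.card H) (by omega) H rfl (by omega))
    · exact pgroupSolvable G 11 1 (by norm_num) (by norm_num [hG])
    · exact solv_step G (critAB G 2 (by norm_num) (by omega) ⟨3, by norm_num, by omega, by norm_num⟩ (by rw [hG]; decide)) (fun H _ _ hH => ih (Nat.card H) (by omega) H rfl (by omega))
    · exact pgroupSolvable G 13 1 (by norm_num) (by norm_num [hG])
    · exact solv_step G (critAB G 7 (by norm_num) (by omega) ⟨2, by norm_num, by omega, by norm_num⟩ (by rw [hG]; decide)) (fun H _ _ hH => ih (Nat.card H) (by omega) H rfl (by omega))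
    · exact solv_step G (critAB G 5 (by norm_num) (by omega) ⟨3, by norm_num, by omega, by norm_num⟩ (by rw [hG]; decide)) (fun H _ _ hH => ih (Nat.card H) (by omega) H rfl (by omega))
    · exact pgroupSolvable G 2 4 (by norm_num) (by norm_num [hG])
    · exact pgroupSolvable G 17 1 (by norm_num) (by norm_num [hG])
    · exact solv_step G (critAB G 3 (by norm_num) (by omega) ⟨2, by norm_num, by omega, by norm_num⟩ (by rw [hG]; decide)) (fun H _ _ hH => ih (Nat.card H) (by omega) H rfl (by omega))
    · exact pgroupSolvable G 19 1 (by norm_num) (by norm_num [hG])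
    · exact solv_step G (critAB G 5 (by norm_num) (by omega) ⟨2, by norm_num, by omega, by norm_num⟩ (by rw [hG]; decide)) (fun H _ _ hH => ih (Nat.card H) (by omega) H rfl (by omega))
    · exact solv_step G (critAB G 7 (by norm_num) (by omega) ⟨3, by norm_num, by omega, by norm_num⟩ (by rw [hG]; decide)) (fun H _ _ hH => ih (Nat.card H) (by omega) H rfl (by omega))
    · exact solv_step G (critAB G 11 (by norm_num) (by omega) ⟨2, by norm_num, by omega, by norm_num⟩ (by rw [hG]; decide)) (fun H _ _ hH => ih (Nat.card H) (by omega) H rfl (by omega))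
    · exact pgroupSolvable G 23 1 (by norm_num) (by norm_num [hG])
    · exact solv_step G (critAB G 2 (by norm_num) (by omega) ⟨3, by norm_num, by omega, by norm_num⟩ (by rw [hG]; decide)) (fun H _ _ hH => ih (Nat.card H) (by omega) H rfl (by omega))
    · exact pgroupSolvable G 5 2 (by norm_num) (by norm_num [hG])
    · exact solv_step G (critAB G 13 (by norm_num) (by omega) ⟨2, by norm_num, by omega, by norm_num⟩ (by rw [hG]; decide)) (fun H _ _ hH => ih (Nat.card H) (by omega) H rfl (by omega))
    · exact pgroupSolvable G 3 3 (by norm_num) (by norm_num [hG])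
    · exact solv_step G (critAB G 7 (by norm_num) (by omega) ⟨2, by norm_num, by omega, by norm_num⟩ (by rw [hG]; decide)) (fun H _ _ hH => ih (Nat.card H) (by omega) H rfl (by omega))
    · exact pgroupSolvable G 29 1 (by norm_num) (by norm_num [hG])
    · exact solv_step G (critC G 5 6 (by norm_num) (by omega) (by norm_num) (by norm_num) (by decide)) (fun H _ _ hH => ih (Nat.card H) (by omega) H rfl (by omega))
    · exact pgroupSolvable G 31 1 (by norm_num) (by norm_num [hG])
    · exact pgroupSolvable G 2 5 (by norm_num) (by norm_num [hG])
    · exact solv_step G (critAB G 11 (by norm_num) (by omega) ⟨3, by norm_num, by omega, by norm_num⟩ (by rw [hG]; decide)) (fun H _ _ hH => ih (Nat.card H) (by omega) H rfl (by omega))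
    · exact solv_step G (critAB G 17 (by norm_num) (by omega) ⟨2, by norm_num, by omega, by norm_num⟩ (by rw [hG]; decide)) (fun H _ _ hH => ih (Nat.card H) (by omega) H rfl (by omega))
    · exact solv_step G (critAB G 7 (by norm_num) (by omega) ⟨5, by norm_num, by omega, by norm_num⟩ (by rw [hG]; decide)) (fun H _ _ hH => ih (Nat.card H) (by omega) H rfl (by omega))
    · exact solv_step G (critAB G 3 (by norm_num) (by omega) ⟨2, by norm_num, by omega, by norm_num⟩ (by rw [hG]; decide)) (fun H _ _ hH => ih (Nat.card H) (by omega) H rfl (by omega))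
    · exact pgroupSolvable G 37 1 (by norm_num) (by norm_num [hG])
    · exact solv_step G (critAB G 19 (by norm_num) (by omega) ⟨2, by norm_num, by omega, by norm_num⟩ (by rw [hG]; decide)) (fun H _ _ hH => ih (Nat.card H) (by omega) H rfl (by omega))
    · exact solv_step G (critAB G 13 (by norm_num) (by omega) ⟨3, by norm_num, by omega, by norm_num⟩ (by rw [hG]; decide)) (fun H _ _ hH => ih (Nat.card H) (by omega) H rfl (by omega))
    · exact solv_step G (critAB G 5 (by norm_num) (by omega) ⟨2, by norm_num, by omega, by norm_num⟩ (by rw [hG]; decide)) (fun H _ _ hH => ih (Nat.card H) (by omega) H rfl (by omega))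
    · exact pgroupSolvable G 41 1 (by norm_num) (by norm_num [hG])
    · exact solv_step G (critAB G 7 (by norm_num) (by omega) ⟨2, by norm_num, by omega, by norm_num⟩ (by rw [hG]; decide)) (fun H _ _ hH => ih (Nat.card H) (by omega) H rfl (by omega))
    · exact pgroupSolvable G 43 1 (by norm_num) (by norm_num [hG])
    · exact solv_step G (critAB G 11 (by norm_num) (by omega) ⟨2, by norm_num, by omega, by norm_num⟩ (by rw [hG]; decide)) (fun H _ _ hH => ih (Nat.card H) (by omega) H rfl (by omega))
    · exact solv_step G (critAB G 5 (by norm_num) (by omega) ⟨3, by norm_num, by omega, by norm_num⟩ (by rw [hG]; decide)) (fun H _ _ hH => ih (Nat.card H) (by omega) H rfl (by omega))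
    · exact solv_step G (critAB G 23 (by norm_num) (by omega) ⟨2, by norm_num, by omega, by norm_num⟩ (by rw [hG]; decide)) (fun H _ _ hH => ih (Nat.card H) (by omega) H rfl (by omega))
    · exact pgroupSolvable G 47 1 (by norm_num) (by norm_num [hG])
    · exact solv_step G (critAB G 2 (by norm_num) (by omega) ⟨3, by norm_num, by omega, by norm_num⟩ (by rw [hG]; decide)) (fun H _ _ hH => ih (Nat.card H) (by omega) H rfl (by omega))
    · exact pgroupSolvable G 7 2 (by norm_num) (by norm_num [hG])
    · exact solv_step G (critAB G 5 (by norm_num) (by omega) ⟨2, by norm_num, by omega, by norm_num⟩ (by rw [hG]; decide)) (fun H _ _ hH => ih (Nat.card H) (by omega) H rfl (by omega))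
    · exact solv_step G (critAB G 17 (by norm_num) (by omega) ⟨3, by norm_num, by omega, by norm_num⟩ (by rw [hG]; decide)) (fun H _ _ hH => ih (Nat.card H) (by omega) H rfl (by omega))
    · exact solv_step G (critAB G 13 (by norm_num) (by omega) ⟨2, by norm_num, by omega, by norm_num⟩ (by rw [hG]; decide)) (fun H _ _ hH => ih (Nat.card H) (by omega) H rfl (by omega))
    · exact pgroupSolvable G 53 1 (by norm_num) (by norm_num [hG])
    · exact solv_step G (critAB G 3 (by norm_num) (by omega) ⟨2, by norm_num, by omega, by norm_num⟩ (by rw [hG]; decide)) (fun H _ _ hH => ih (Nat.card H) (by omega) H rfl (by omega))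
    · exact solv_step G (critAB G 11 (by norm_num) (by omega) ⟨5, by norm_num, by omega, by norm_num⟩ (by rw [hG]; decide)) (fun H _ _ hH => ih (Nat.card H) (by omega) H rfl (by omega))
    · exact solv_step G (critC G 7 8 (by norm_num) (by omega) (by norm_num) (by norm_num) (by decide)) (fun H _ _ hH => ih (Nat.card H) (by omega) H rfl (by omega))
    · exact solv_step G (critAB G 19 (by norm_num) (by omega) ⟨3, by norm_num, by omega, by norm_num⟩ (by rw [hG]; decide)) (fun H _ _ hH => ih (Nat.card H) (by omega) H rfl (by omega))
    · exact solv_step G (critAB G 29 (by norm_num) (by omega) ⟨2, by norm_num, by omega, by norm_num⟩ (by rw [hG]; decide)) (fun H _ _ hH => ih (Nat.card H) (by omega) H rfl (by omega))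
    · exact pgroupSolvable G 59 1 (by norm_num) (by norm_num [hG])

end SolvAux

theorem stmt_7 (G : Type*) [Group G] [Finite G] (hcard : Nat.card G < 60) :
    IsSolvable G := by
  exact solv_aux (Nat.card G) G rfl hcard
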